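/- Let Z and Π be n×n real positive definite matrices. Let z be a random vector in ℝⁿ distributed according to the multivariate Gaussian measure N(0,Z), and let ξ be uniformly distributed on [0,1] and independent of z. Then for every Borel set S ⊆ ℝⁿ, P(z ∈ S and ξ ≤ exp(−(1/2) zᵀ Π⁻¹ z)) = det(I + Z Π⁻¹)^{−1/2} · N(0, (Z⁻¹ + Π⁻¹)⁻¹)(S). In other words, conditioned on the event {ξ ≤ exp(−(1/2) zᵀ Π⁻¹ z)}, the random vector z is distributed as N(0, (Z⁻¹ + Π⁻¹)⁻¹). -/

import Mathlib

open MeasureTheory Matrix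

/-- The multivariate Gaussian measure `N(0, Z)` on `ℝⁿ` with positive definite
covariance matrix `Z`, given by its density with respect to Lebesgue measure. -/
noncomputable def mvGaussian (n : ℕ) (Z : Matrix (Fin n) (Fin n) ℝ) :
    Measure (Fin n → ℝ) :=
  volume.withDensity fun z => ENNReal.ofReal
    (((2 * Real.pi) ^ (n : ℝ) * Z.det) ^ (-(1 : ℝ) / 2) *
      Real.exp (-(1 / 2) * (z ⬝ᵥ Z⁻¹.mulVec z)))

lemma measurable_quad {n : ℕ} (A : Matrix (Fin n) (Fin n) ℝ) :
    Measurable fun z : Fin n → ℝ => z ⬝ᵥ A.mulVec z := by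
  simp only [dotProduct, mulVec]
  exact Finset.measurable_sum _ fun i _ =>
    (measurable_pi_apply i).mul
      (Finset.measurable_sum _ fun j _ => measurable_const.mul (measurable_pi_apply j))

lemma measurable_dens {n : ℕ} (A : Matrix (Fin n) (Fin n) ℝ) (c : ℝ) :
    Measurable fun z : Fin n → ℝ =>
      ENNReal.ofReal (c * Real.exp (-(1 / 2 : ℝ) * (z ⬝ᵥ A.mulVec z))) :=
  ENNReal.measurable_ofReal.comp <|
    measurable_const.mul (Real.measurable_exp.comp (measurable_const.mul (measurable_quad A)))

theorem gaussian_event_trigger_conditional (n : ℕ) (Z Pm : Matrix (Fin n) (Fin n) ℝ)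
    (hZ : Z.PosDef) (hPm : Pm.PosDef) :
    ∀ S : Set (Fin n → ℝ), MeasurableSet S →
      ((mvGaussian n Z).prod (volume.restrict (Set.Icc (0 : ℝ) 1)))
        {p : (Fin n → ℝ) × ℝ |
          p.1 ∈ S ∧ p.2 ≤ Real.exp (-(1 / 2) * (p.1 ⬝ᵥ (Pm⁻¹).mulVec p.1))}
        = ENNReal.ofReal ((1 + Z * Pm⁻¹).det ^ (-(1 : ℝ) / 2)) *
            mvGaussian n ((Z⁻¹ + Pm⁻¹)⁻¹) S := by
  intro S hS
  have hZdet : IsUnit Z.det := isUnit_iff_ne_zero.mpr hZ.det_pos.ne'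
  have hSum : (Z⁻¹ + Pm⁻¹).PosDef := hZ.inv.add hPm.inv
  have hSumdet : IsUnit (Z⁻¹ + Pm⁻¹).det := isUnit_iff_ne_zero.mpr hSum.det_pos.ne'
  have hWinv : ((Z⁻¹ + Pm⁻¹)⁻¹)⁻¹ = Z⁻¹ + Pm⁻¹ := Matrix.nonsing_inv_nonsing_inv _ hSumdet
  -- quadratic form nonnegativity
  have hqP : ∀ z : Fin n → ℝ, 0 ≤ z ⬝ᵥ (Pm⁻¹).mulVec z := fun z => by
    simpa using hPm.inv.posSemidef.dotProduct_mulVec_nonneg z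
  have hqZ : ∀ z : Fin n → ℝ, 0 ≤ z ⬝ᵥ (Z⁻¹).mulVec z := fun z => by
    simpa using hZ.inv.posSemidef.dotProduct_mulVec_nonneg z
  -- abbreviations
  set g : (Fin n → ℝ) → ℝ := fun z => Real.exp (-(1 / 2 : ℝ) * (z ⬝ᵥ (Pm⁻¹).mulVec z)) with hgdef
  have hg01 : ∀ z, 0 < g z ∧ g z ≤ 1 := fun z =>
    ⟨Real.exp_pos _, Real.exp_le_one_iff.mpr (by nlinarith [hqP z])⟩
  have hgmeas : Measurable g :=
    Real.measurable_exp.comp (measurable_const.mul (measurable_quad _))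
  have hAmeas : MeasurableSet {p : (Fin n → ℝ) × ℝ | p.1 ∈ S ∧ p.2 ≤ g p.1} :=
    (hS.prod MeasurableSet.univ).inter
      (measurableSet_le measurable_snd (hgmeas.comp measurable_fst)) |>.congr (by
        ext p; simp [and_comm])
  have hshow : {p : (Fin n → ℝ) × ℝ |
      p.1 ∈ S ∧ p.2 ≤ Real.exp (-(1 / 2) * (p.1 ⬝ᵥ (Pm⁻¹).mulVec p.1))}
      = {p : (Fin n → ℝ) × ℝ | p.1 ∈ S ∧ p.2 ≤ g p.1} := rfl
  rw [hshow]
  rw [Measure.prod_apply hAmeas]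
  have hslice : ∀ z : Fin n → ℝ,
      (volume.restrict (Set.Icc (0 : ℝ) 1))
        (Prod.mk z ⁻¹' {p : (Fin n → ℝ) × ℝ | p.1 ∈ S ∧ p.2 ≤ g p.1})
      = S.indicator (fun z => ENNReal.ofReal (g z)) z := by
    intro z
    by_cases hz : z ∈ S
    · have hpre : Prod.mk z ⁻¹' {p : (Fin n → ℝ) × ℝ | p.1 ∈ S ∧ p.2 ≤ g p.1}
          = Set.Iic (g z) := by
        ext ξ; simp [hz]
      rw [hpre, Measure.restrict_apply measurableSet_Iic]
      have hinter : Set.Iic (g z) ∩ Set.Icc (0 : ℝ) 1 = Set.Icc 0 (g z) := by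
        ext ξ
        constructor
        · rintro ⟨h1, h2, h3⟩; exact ⟨h2, h1⟩
        · rintro ⟨h1, h2⟩; exact ⟨h2, h1, h2.trans (hg01 z).2⟩
      rw [hinter, Real.volume_Icc, Set.indicator_of_mem hz, sub_zero]
    · have hpre : Prod.mk z ⁻¹' {p : (Fin n → ℝ) × ℝ | p.1 ∈ S ∧ p.2 ≤ g p.1}
          = ∅ := by
        ext ξ; simp [hz]
      rw [hpre, Set.indicator_of_notMem hz]
      simp
  rw [lintegral_congr hslice, lintegral_indicator hS _]
  -- unfold both gaussians
  rw [mvGaussian, mvGaussian, restrict_withDensity hS,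
    lintegral_withDensity_eq_lintegral_mul _ (measurable_dens _ _)
      hgmeas.ennreal_ofReal,
    withDensity_apply _ hS, ← lintegral_const_mul _ (measurable_dens _ _)]
  refine setLIntegral_congr_fun hS (fun z _ => ?_)
  -- pointwise: density equality
  have ht : (0 : ℝ) < (2 * Real.pi) ^ (n : ℝ) :=
    Real.rpow_pos_of_pos (by positivity) _
  set r : ℝ := -(1 : ℝ) / 2 with hr
  set a : ℝ := Z.det with ha
  set b : ℝ := (Z⁻¹ + Pm⁻¹).det with hb
  have hapos : 0 < a := hZ.det_pos
  have hbpos : 0 < b := hSum.det_pos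
  have hdet1 : (1 + Z * Pm⁻¹).det = a * b := by
    have : (1 : Matrix (Fin n) (Fin n) ℝ) + Z * Pm⁻¹ = Z * (Z⁻¹ + Pm⁻¹) := by
      rw [Matrix.mul_add, Matrix.mul_nonsing_inv _ hZdet]
    rw [this, Matrix.det_mul]
  have hdetW : ((Z⁻¹ + Pm⁻¹)⁻¹).det = b⁻¹ := by
    rw [Matrix.det_nonsing_inv, Ring.inverse_eq_inv']
  have hcW : (0 : ℝ) < ((2 * Real.pi) ^ (n : ℝ) * ((Z⁻¹ + Pm⁻¹)⁻¹).det) ^ r := by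
    rw [hdetW]; exact Real.rpow_pos_of_pos (by positivity) _
  have hcalc : ((2 * Real.pi) ^ (n : ℝ) * a) ^ r
      = (a * b) ^ r * (((2 * Real.pi) ^ (n : ℝ)) * b⁻¹) ^ r := by
    rw [Real.mul_rpow hapos.le hbpos.le, Real.mul_rpow ht.le (inv_nonneg.mpr hbpos.le),
      Real.inv_rpow hbpos.le, Real.mul_rpow ht.le hapos.le]
    have hbr : b ^ r ≠ 0 := (Real.rpow_pos_of_pos hbpos _).ne'
    field_simp
  -- combine exponentials
  have hquad : z ⬝ᵥ (Z⁻¹).mulVec z + z ⬝ᵥ (Pm⁻¹).mulVec z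
      = z ⬝ᵥ (((Z⁻¹ + Pm⁻¹)⁻¹)⁻¹).mulVec z := by
    rw [hWinv, Matrix.add_mulVec, dotProduct_add]
  have hexp : Real.exp (-(1 / 2 : ℝ) * (z ⬝ᵥ (Z⁻¹).mulVec z)) * g z
      = Real.exp (-(1 / 2 : ℝ) * (z ⬝ᵥ (((Z⁻¹ + Pm⁻¹)⁻¹)⁻¹).mulVec z)) := by
    rw [hgdef, ← Real.exp_add, ← hquad]; ring_nf
  simp only [Pi.mul_apply]
  rw [← ENNReal.ofReal_mul
    (mul_nonneg (Real.rpow_nonneg (mul_nonneg ht.le hapos.le) r) (Real.exp_pos _).le),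
    ← ENNReal.ofReal_mul
    (by rw [hdet1]; exact Real.rpow_nonneg (mul_nonneg hapos.le hbpos.le) r)]
  congr 1
  rw [hdet1, hcalc, hdetW]
  linear_combination ((a * b) ^ r * ((2 * Real.pi) ^ (n : ℝ) * b⁻¹) ^ r) * hexp
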